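/- Let y ∈ (0,1) and n ∈ ℤ. Then the principal value integral p.v. ∫₀¹ cot(π(y − x)) e^{2πinx} dx, defined as lim_{δ→0⁺} ∫_{[0,1]∖(y−δ, y+δ)} cot(π(y − x)) e^{2πinx} dx, exists and equals −i · sgn(n) · e^{2πiny}, where sgn(n) is 1 for n > 0, −1 for n < 0, and 0 for n = 0. -/

import Mathlib

open Real MeasureTheory Filter Set Complex

private lemma geom_id (v w : ℂ) : ∀ k : ℕ, (v + w) * (w ^ (k+1) - v ^ (k+1)) =
    (w - v) * (w ^ (k+1) + v ^ (k+1) + 2 * ∑ j ∈ Finset.range k, v ^ (k - j) * w ^ (j+1)) := by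
  intro k
  induction k with
  | zero => simp; ring
  | succ k ih =>
    rw [Finset.sum_range_succ]
    have h1 : ∑ j ∈ Finset.range k, v ^ (k + 1 - j) * w ^ (j+1)
        = v * ∑ j ∈ Finset.range k, v ^ (k - j) * w ^ (j+1) := by
      rw [Finset.mul_sum]
      refine Finset.sum_congr rfl fun j hj => ?_
      rw [Finset.mem_range] at hj
      rw [show k + 1 - j = (k - j) + 1 by omega, pow_succ]
      ring
    rw [h1]
    rw [show k + 1 - k = 1 by omega, pow_one]
    linear_combination v * ih

private lemma exp_pow_form (m : ℕ) (t : ℝ) :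
    Complex.exp (2*π*Complex.I*(m:ℂ)*t) = Complex.exp (2*π*Complex.I*t) ^ m := by
  rw [← Complex.exp_nat_mul]
  congr 1
  ring

private lemma exp_sub_ne (y x : ℝ) (h : Real.sin (π * (y - x)) ≠ 0) :
    Complex.exp (2*π*Complex.I*y) - Complex.exp (2*π*Complex.I*x) ≠ 0 := by
  set a : ℂ := ((π * (y - x) : ℝ) : ℂ) with ha
  have hsa : Complex.sin a ≠ 0 := by
    rw [ha, ← Complex.ofReal_sin]
    exact_mod_cast Complex.ofReal_ne_zero.2 h
  set p := Complex.exp (a * Complex.I) with hp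
  have hwne : Complex.exp (2*π*Complex.I*x) ≠ 0 := Complex.exp_ne_zero _
  have hp2 : p * p * Complex.exp (2*π*Complex.I*x) = Complex.exp (2*π*Complex.I*y) := by
    rw [hp, ← Complex.exp_add, ← Complex.exp_add]
    congr 1
    rw [ha]; push_cast; ring
  have hpinv : Complex.exp (-a * Complex.I) = p⁻¹ := by
    rw [hp, ← Complex.exp_neg]; congr 1; ring
  intro hvw
  apply hsa
  have hveq := sub_eq_zero.mp hvw
  rw [hveq] at hp2
  have hpp : p * p = 1 := mul_right_cancel₀ hwne (by rw [hp2, one_mul])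
  have hpinv' : p⁻¹ = p := inv_eq_of_mul_eq_one_right hpp
  rw [Complex.sin, hpinv, hpinv']
  ring

private lemma cot_formula (y x : ℝ) (h : Real.sin (π * (y - x)) ≠ 0) :
    ((Real.cos (π * (y - x)) / Real.sin (π * (y - x)) : ℝ) : ℂ)
      = Complex.I * (Complex.exp (2*π*Complex.I*y) + Complex.exp (2*π*Complex.I*x)) /
        (Complex.exp (2*π*Complex.I*y) - Complex.exp (2*π*Complex.I*x)) := by
  set v := Complex.exp (2*π*Complex.I*y) with hv
  set w := Complex.exp (2*π*Complex.I*x) with hw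
  set a : ℂ := ((π * (y - x) : ℝ) : ℂ) with ha
  have hsa : Complex.sin a ≠ 0 := by
    rw [ha, ← Complex.ofReal_sin]
    exact_mod_cast Complex.ofReal_ne_zero.2 h
  set p := Complex.exp (a * Complex.I) with hp
  have hpne : p ≠ 0 := Complex.exp_ne_zero _
  have hwne : w ≠ 0 := Complex.exp_ne_zero _
  have hp2 : p * p * w = v := by
    rw [hp, hw, hv, ← Complex.exp_add, ← Complex.exp_add]
    congr 1
    rw [ha]; push_cast; ring
  have hpinv : Complex.exp (-a * Complex.I) = p⁻¹ := by
    rw [hp, ← Complex.exp_neg]; congr 1; ring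
  have hsin : Complex.sin a = (p⁻¹ - p) * Complex.I / 2 := by
    rw [Complex.sin, hpinv]
  have hcos : Complex.cos a = (p + p⁻¹) / 2 := by
    rw [Complex.cos, hpinv]
  have hvw : v - w ≠ 0 := exp_sub_ne y x h
  have hsa' : (p⁻¹ - p) * Complex.I / 2 ≠ 0 := by rw [← hsin]; exact hsa
  rw [Complex.ofReal_div, Complex.ofReal_cos, Complex.ofReal_sin, ← ha,
    hcos, hsin, div_eq_div_iff hsa' hvw]
  field_simp
  linear_combination (-2) * hp2 + (p^2*v + p^2*w - v - w) * Complex.I_sq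

/-- The trigonometric polynomial remainder. -/
noncomputable def Gf (y : ℝ) (k : ℕ) (x : ℝ) : ℂ :=
  -Complex.I * Complex.exp (2*π*Complex.I*((k:ℂ)+1)*x)
  - Complex.I * Complex.exp (2*π*Complex.I*((k:ℂ)+1)*y)
  - 2*Complex.I * ∑ j ∈ Finset.range k,
      Complex.exp (2*π*Complex.I*((k:ℂ)-(j:ℂ))*y) * Complex.exp (2*π*Complex.I*((j:ℂ)+1)*x)

private lemma pointwise (y x : ℝ) (k : ℕ) (h : Real.sin (π * (y - x)) ≠ 0) :
    ((Real.cos (π*(y-x)) / Real.sin (π*(y-x)) : ℝ) : ℂ) * Complex.exp (2*π*Complex.I*((k:ℂ)+1)*x)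
    = Complex.exp (2*π*Complex.I*((k:ℂ)+1)*y) * ((Real.cos (π*(y-x)) / Real.sin (π*(y-x)) : ℝ) : ℂ)
      + Gf y k x := by
  rw [Gf]
  have hvw := exp_sub_ne y x h
  set v := Complex.exp (2*π*Complex.I*(y:ℂ)) with hv
  set w := Complex.exp (2*π*Complex.I*(x:ℂ)) with hw
  have e1 : ∀ t : ℝ, Complex.exp (2*π*Complex.I*((k:ℂ)+1)*(t:ℂ))
      = Complex.exp (2*π*Complex.I*(t:ℂ)) ^ (k+1) := by
    intro t
    rw [← exp_pow_form]
    congr 1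
    push_cast
    ring
  have e2 : ∑ j ∈ Finset.range k,
        Complex.exp (2*π*Complex.I*((k:ℂ)-(j:ℂ))*(y:ℂ)) * Complex.exp (2*π*Complex.I*((j:ℂ)+1)*(x:ℂ))
      = ∑ j ∈ Finset.range k, v ^ (k - j) * w ^ (j+1) := by
    refine Finset.sum_congr rfl fun j hj => ?_
    rw [Finset.mem_range] at hj
    rw [hv, hw, ← exp_pow_form (k-j), ← exp_pow_form (j+1)]
    congr 2 <;> [skip; skip] <;> push_cast [Nat.cast_sub hj.le] <;> ring
  rw [cot_formula y x h, e1 x, e1 y, e2, ← hv, ← hw]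
  field_simp
  linear_combination geom_id v w k

private lemma cot_int (y a b : ℝ) (h : ∀ x ∈ Set.uIcc a b, Real.sin (π*(y-x)) ≠ 0) :
    ∫ x in a..b, Real.cos (π*(y-x)) / Real.sin (π*(y-x))
      = (Real.log (Real.sin (π*(y-a))) - Real.log (Real.sin (π*(y-b))))/π := by
  have hder : ∀ x ∈ Set.uIcc a b,
      HasDerivAt (fun t => -(1/π) * Real.log (Real.sin (π*(y-t))))
        (Real.cos (π*(y-x)) / Real.sin (π*(y-x))) x := by
    intro x hx
    have hlin : HasDerivAt (fun t : ℝ => π*(y-t)) (π * (-1)) x :=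
      (((hasDerivAt_id x).const_sub y)).const_mul π
    have hsin : HasDerivAt (fun t => Real.sin (π*(y-t)))
        (Real.cos (π*(y-x)) * (π * (-1))) x := (Real.hasDerivAt_sin _).comp x hlin
    have hlog := (hsin.log (h x hx)).const_mul (-(1/π))
    refine hlog.congr_deriv ?_
    field_simp
  have hcont : ContinuousOn (fun x => Real.cos (π*(y-x)) / Real.sin (π*(y-x))) (Set.uIcc a b) := by
    apply ContinuousOn.div
    · fun_prop
    · fun_prop
    · exact h
  rw [intervalIntegral.integral_eq_sub_of_hasDerivAt hder hcont.intervalIntegrable]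
  field_simp
  ring

private lemma sin_ne_on (y x δ : ℝ) (hy : y ∈ Set.Ioo (0:ℝ) 1) (hδ : 0 < δ)
    (hx : x ∈ Set.Icc (0:ℝ) 1 \ Set.Ioo (y - δ) (y + δ)) : Real.sin (π*(y-x)) ≠ 0 := by
  obtain ⟨⟨hx0, hx1⟩, hxo⟩ := hx
  obtain ⟨hy0, hy1⟩ := hy
  intro hs
  rw [Real.sin_eq_zero_iff] at hs
  obtain ⟨m, hm⟩ := hs
  have hπ : (π:ℝ) ≠ 0 := Real.pi_ne_zero
  have hmyx : (m:ℝ) = y - x := by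
    have : π * (m:ℝ) = π * (y - x) := by linarith [hm]
    exact mul_left_cancel₀ hπ this
  have hb1 : (-1:ℝ) < (m:ℝ) := by rw [hmyx]; linarith
  have hb2 : ((m:ℝ)) < 1 := by rw [hmyx]; linarith
  have hm0 : m = 0 := by
    have h1 : (-1:ℤ) < m := by exact_mod_cast hb1
    have h2 : m < 1 := by exact_mod_cast hb2
    omega
  rw [hm0] at hmyx
  simp at hmyx
  apply hxo
  constructor <;> linarith

private lemma set_decomp (y δ : ℝ) (h1 : 0 < δ) (h2 : δ < y) (h3 : δ < 1 - y) :
    Set.Icc (0:ℝ) 1 \ Set.Ioo (y-δ) (y+δ) = Set.Icc 0 (y-δ) ∪ Set.Icc (y+δ) 1 := by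
  ext x
  simp only [Set.mem_diff, Set.mem_Icc, Set.mem_Ioo, Set.mem_union, not_and, not_lt]
  constructor
  · rintro ⟨⟨h0, hx1⟩, hno⟩
    rcases le_or_gt x (y-δ) with hc | hc
    · exact Or.inl ⟨h0, hc⟩
    · exact Or.inr ⟨hno hc, hx1⟩
  · rintro (⟨h0, hx⟩ | ⟨hx, hx1⟩)
    · exact ⟨⟨h0, by linarith⟩, fun hh => by linarith⟩
    · exact ⟨⟨by linarith, hx1⟩, fun hh => hx⟩

private lemma cot_zero_real (y δ : ℝ) (h1 : 0 < δ) (h2 : δ < y) (h3 : δ < 1 - y) :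
    ∫ x in Set.Icc (0:ℝ) 1 \ Set.Ioo (y-δ) (y+δ),
      Real.cos (π*(y-x)) / Real.sin (π*(y-x)) = 0 := by
  have hπ := Real.pi_pos
  have hsinA : ∀ x ∈ Set.uIcc (0:ℝ) (y-δ), Real.sin (π*(y-x)) ≠ 0 := by
    intro x hx
    rw [Set.uIcc_of_le (by linarith)] at hx
    obtain ⟨ha, hb⟩ := hx
    have : 0 < Real.sin (π*(y-x)) :=
      Real.sin_pos_of_pos_of_lt_pi (by nlinarith) (by nlinarith)
    exact this.ne'
  have hsinB : ∀ x ∈ Set.uIcc (y+δ) 1, Real.sin (π*(y-x)) ≠ 0 := by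
    intro x hx
    rw [Set.uIcc_of_le (by linarith)] at hx
    obtain ⟨ha, hb⟩ := hx
    rw [show π*(y-x) = -(π*(x-y)) by ring, Real.sin_neg]
    have : 0 < Real.sin (π*(x-y)) :=
      Real.sin_pos_of_pos_of_lt_pi (by nlinarith) (by nlinarith)
    exact (neg_ne_zero.2 this.ne')
  have hcontA : ContinuousOn (fun x => Real.cos (π*(y-x)) / Real.sin (π*(y-x)))
      (Set.Icc 0 (y-δ)) := by
    apply ContinuousOn.div
    · fun_prop
    · fun_prop
    · intro x hx
      exact hsinA x (by rwa [Set.uIcc_of_le (by linarith)])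
  have hcontB : ContinuousOn (fun x => Real.cos (π*(y-x)) / Real.sin (π*(y-x)))
      (Set.Icc (y+δ) 1) := by
    apply ContinuousOn.div
    · fun_prop
    · fun_prop
    · intro x hx
      exact hsinB x (by rwa [Set.uIcc_of_le (by linarith)])
  have hdisj : Disjoint (Set.Icc (0:ℝ) (y-δ)) (Set.Icc (y+δ) 1) := by
    rw [Set.disjoint_left]
    intro x hx hx'
    simp only [Set.mem_Icc] at hx hx'
    linarith
  rw [set_decomp y δ h1 h2 h3,
    MeasureTheory.setIntegral_union hdisj measurableSet_Icc
      (hcontA.integrableOn_compact isCompact_Icc) (hcontB.integrableOn_compact isCompact_Icc),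
    MeasureTheory.integral_Icc_eq_integral_Ioc, MeasureTheory.integral_Icc_eq_integral_Ioc,
    ← intervalIntegral.integral_of_le (by linarith : (0:ℝ) ≤ y-δ),
    ← intervalIntegral.integral_of_le (by linarith : y+δ ≤ 1),
    cot_int y 0 (y-δ) hsinA, cot_int y (y+δ) 1 hsinB]
  have e1 : π*(y-(0:ℝ)) = π*y := by ring
  have e2 : π*(y-(y-δ)) = π*δ := by ring
  have e3 : π*(y-(y+δ)) = -(π*δ) := by ring
  have e4 : π*(y-1) = -(π - π*y) := by ring
  rw [e1, e2, e3, e4, Real.sin_neg, Real.sin_neg, Real.log_neg_eq_log, Real.log_neg_eq_log,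
    Real.sin_pi_sub]
  ring

private lemma cot_zero (y δ : ℝ) (h1 : 0 < δ) (h2 : δ < y) (h3 : δ < 1 - y) :
    ∫ x in Set.Icc (0:ℝ) 1 \ Set.Ioo (y-δ) (y+δ),
      ((Real.cos (π*(y-x)) / Real.sin (π*(y-x)) : ℝ) : ℂ) = 0 := by
  have h2' : ∫ x in Set.Icc (0:ℝ) 1 \ Set.Ioo (y-δ) (y+δ),
      ((Real.cos (π*(y-x)) / Real.sin (π*(y-x)) : ℝ) : ℂ)
      = ((∫ x in Set.Icc (0:ℝ) 1 \ Set.Ioo (y-δ) (y+δ),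
        Real.cos (π*(y-x)) / Real.sin (π*(y-x)) : ℝ) : ℂ) := integral_ofReal
  rw [h2', cot_zero_real y δ h1 h2 h3, Complex.ofReal_zero]

private lemma exp_integral_zero (m : ℕ) :
    ∫ x in (0:ℝ)..1, Complex.exp (2*π*Complex.I*((m:ℂ)+1)*x) = 0 := by
  have hc : (2*(π:ℂ)*Complex.I*((m:ℂ)+1)) ≠ 0 :=
    mul_ne_zero (mul_ne_zero (mul_ne_zero two_ne_zero
      (Complex.ofReal_ne_zero.2 Real.pi_ne_zero)) Complex.I_ne_zero)
      (Nat.cast_add_one_ne_zero m)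
  rw [integral_exp_mul_complex hc]
  have h1 : Complex.exp (2*(π:ℂ)*Complex.I*((m:ℂ)+1)*((1:ℝ):ℂ)) = 1 := by
    rw [show (2*(π:ℂ)*Complex.I*((m:ℂ)+1)*((1:ℝ):ℂ)) = ((m+1 : ℤ):ℂ)*(2*π*Complex.I) by
      push_cast; ring]
    exact Complex.exp_int_mul_two_pi_mul_I _
  rw [h1]
  simp

private lemma Gf_cont (y : ℝ) (k : ℕ) : Continuous (Gf y k) := by
  unfold Gf
  apply Continuous.sub
  apply Continuous.sub
  · fun_prop
  · fun_prop
  · apply Continuous.mul continuous_const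
    apply continuous_finset_sum
    intro j _
    fun_prop

private lemma Gf_integral (y : ℝ) (k : ℕ) :
    ∫ x in Set.Icc (0:ℝ) 1, Gf y k x
      = -Complex.I * Complex.exp (2*π*Complex.I*((k:ℂ)+1)*y) := by
  rw [MeasureTheory.integral_Icc_eq_integral_Ioc,
    ← intervalIntegral.integral_of_le (zero_le_one)]
  have i1 : IntervalIntegrable
      (fun x : ℝ => -Complex.I * Complex.exp (2*π*Complex.I*((k:ℂ)+1)*x)) volume 0 1 :=
    Continuous.intervalIntegrable (by fun_prop) 0 1
  have i2 : IntervalIntegrable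
      (fun _ : ℝ => Complex.I * Complex.exp (2*π*Complex.I*((k:ℂ)+1)*y)) volume 0 1 :=
    intervalIntegrable_const
  have i3 : IntervalIntegrable (fun x : ℝ => 2*Complex.I * ∑ j ∈ Finset.range k,
      Complex.exp (2*π*Complex.I*((k:ℂ)-(j:ℂ))*y) * Complex.exp (2*π*Complex.I*((j:ℂ)+1)*x))
      volume 0 1 := by
    apply Continuous.intervalIntegrable
    apply Continuous.mul continuous_const
    apply continuous_finset_sum
    intro j _
    fun_prop
  have hsum : ∫ x in (0:ℝ)..1, (∑ j ∈ Finset.range k,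
      Complex.exp (2*π*Complex.I*((k:ℂ)-(j:ℂ))*y) * Complex.exp (2*π*Complex.I*((j:ℂ)+1)*x)) = 0 := by
    rw [intervalIntegral.integral_finset_sum]
    · apply Finset.sum_eq_zero
      intro j _
      rw [intervalIntegral.integral_const_mul, exp_integral_zero j, mul_zero]
    · intro j _
      apply Continuous.intervalIntegrable
      fun_prop
  unfold Gf
  rw [intervalIntegral.integral_sub (i1.sub i2) i3, intervalIntegral.integral_sub i1 i2,
    intervalIntegral.integral_const_mul, exp_integral_zero k, intervalIntegral.integral_const,
    intervalIntegral.integral_const_mul, hsum, mul_zero]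
  simp

private lemma norm_exp_unit (c t : ℝ) : ‖Complex.exp (2*π*Complex.I*(c:ℂ)*(t:ℂ))‖ = 1 := by
  rw [show 2*(π:ℂ)*Complex.I*(c:ℂ)*(t:ℂ) = ((2*π*c*t : ℝ) : ℂ) * Complex.I by push_cast; ring]
  exact Complex.norm_exp_ofReal_mul_I _

private lemma Gf_bound (y : ℝ) (k : ℕ) (x : ℝ) : ‖Gf y k x‖ ≤ 2*k+2 := by
  unfold Gf
  have hx1 : ‖-Complex.I * Complex.exp (2*π*Complex.I*((k:ℂ)+1)*(x:ℂ))‖ = 1 := by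
    rw [norm_mul, norm_neg, Complex.norm_I, one_mul,
      show ((k:ℂ)+1) = (((k+1:ℕ):ℝ):ℂ) by push_cast; ring, norm_exp_unit]
  have hy1 : ‖Complex.I * Complex.exp (2*π*Complex.I*((k:ℂ)+1)*(y:ℂ))‖ = 1 := by
    rw [norm_mul, Complex.norm_I, one_mul,
      show ((k:ℂ)+1) = (((k+1:ℕ):ℝ):ℂ) by push_cast; ring, norm_exp_unit]
  have hsum : ‖2*Complex.I * ∑ j ∈ Finset.range k,
      Complex.exp (2*π*Complex.I*((k:ℂ)-(j:ℂ))*y) * Complex.exp (2*π*Complex.I*((j:ℂ)+1)*x)‖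
      ≤ 2*k := by
    rw [norm_mul]
    have h2 : ‖(2:ℂ)*Complex.I‖ = 2 := by
      rw [norm_mul, Complex.norm_I, mul_one]
      simp
    rw [h2]
    have : ‖∑ j ∈ Finset.range k,
        Complex.exp (2*π*Complex.I*((k:ℂ)-(j:ℂ))*y) * Complex.exp (2*π*Complex.I*((j:ℂ)+1)*x)‖
        ≤ (k:ℝ) := by
      calc ‖∑ j ∈ Finset.range k,
          Complex.exp (2*π*Complex.I*((k:ℂ)-(j:ℂ))*y) * Complex.exp (2*π*Complex.I*((j:ℂ)+1)*x)‖
          ≤ ∑ j ∈ Finset.range k, ‖Complex.exp (2*π*Complex.I*((k:ℂ)-(j:ℂ))*y)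
            * Complex.exp (2*π*Complex.I*((j:ℂ)+1)*x)‖ := norm_sum_le _ _
        _ = ∑ j ∈ Finset.range k, 1 := by
            refine Finset.sum_congr rfl fun j _ => ?_
            rw [norm_mul,
              show ((k:ℂ)-(j:ℂ)) = ((((k:ℝ)-(j:ℝ)):ℝ):ℂ) by push_cast; ring, norm_exp_unit,
              show ((j:ℂ)+1) = (((j+1:ℕ):ℝ):ℂ) by push_cast; ring, norm_exp_unit]
            ring
        _ = (k:ℝ) := by simp
    linarith
  calc ‖(-Complex.I * Complex.exp (2*π*Complex.I*((k:ℂ)+1)*(x:ℂ))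
        - Complex.I * Complex.exp (2*π*Complex.I*((k:ℂ)+1)*(y:ℂ)))
        - 2*Complex.I * ∑ j ∈ Finset.range k,
          Complex.exp (2*π*Complex.I*((k:ℂ)-(j:ℂ))*y) * Complex.exp (2*π*Complex.I*((j:ℂ)+1)*x)‖
      ≤ ‖-Complex.I * Complex.exp (2*π*Complex.I*((k:ℂ)+1)*(x:ℂ))
        - Complex.I * Complex.exp (2*π*Complex.I*((k:ℂ)+1)*(y:ℂ))‖
        + ‖2*Complex.I * ∑ j ∈ Finset.range k,
          Complex.exp (2*π*Complex.I*((k:ℂ)-(j:ℂ))*y) * Complex.exp (2*π*Complex.I*((j:ℂ)+1)*x)‖ :=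
        norm_sub_le _ _
    _ ≤ (‖-Complex.I * Complex.exp (2*π*Complex.I*((k:ℂ)+1)*(x:ℂ))‖
        + ‖Complex.I * Complex.exp (2*π*Complex.I*((k:ℂ)+1)*(y:ℂ))‖) + 2*k := by
        gcongr
        exact norm_sub_le _ _
    _ = 2*k+2 := by rw [hx1, hy1]; ring

private lemma main_pos (y : ℝ) (hy : y ∈ Set.Ioo (0:ℝ) 1) (k : ℕ) :
    Filter.Tendsto
      (fun δ : ℝ => ∫ x in Set.Icc (0:ℝ) 1 \ Set.Ioo (y - δ) (y + δ),
        (↑(Real.cos (π * (y - x)) / Real.sin (π * (y - x))) : ℂ) *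
          Complex.exp (2 * π * Complex.I * ((k:ℂ)+1) * x))
      (nhdsWithin 0 (Set.Ioi 0))
      (nhds (-Complex.I * Complex.exp (2 * π * Complex.I * ((k:ℂ)+1) * y))) := by
  obtain ⟨hy0, hy1⟩ := hy
  set ε := min y (1-y) with hε
  have hεpos : 0 < ε := lt_min hy0 (by linarith)
  have hev : Set.Ioo (0:ℝ) ε ∈ nhdsWithin (0:ℝ) (Set.Ioi 0) :=
    Ioo_mem_nhdsGT_of_mem ⟨le_refl 0, hεpos⟩
  have key : ∀ δ ∈ Set.Ioo (0:ℝ) ε,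
      (∫ x in Set.Icc (0:ℝ) 1 \ Set.Ioo (y - δ) (y + δ),
        (↑(Real.cos (π * (y - x)) / Real.sin (π * (y - x))) : ℂ) *
          Complex.exp (2 * π * Complex.I * ((k:ℂ)+1) * x))
      = -Complex.I * Complex.exp (2 * π * Complex.I * ((k:ℂ)+1) * y)
        - ∫ x in Set.Ioo (y-δ) (y+δ), Gf y k x := by
    intro δ hδ
    obtain ⟨hδ0, hδε⟩ := hδ
    have hδy : δ < y := lt_of_lt_of_le hδε (min_le_left _ _)
    have hδ1y : δ < 1 - y := lt_of_lt_of_le hδε (min_le_right _ _)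
    set S := Set.Icc (0:ℝ) 1 \ Set.Ioo (y - δ) (y + δ) with hS
    have hSmeas : MeasurableSet S := measurableSet_Icc.diff measurableSet_Ioo
    have hScomp : IsCompact S := isCompact_Icc.diff isOpen_Ioo
    have hsin : ∀ x ∈ S, Real.sin (π*(y-x)) ≠ 0 := fun x hx =>
      sin_ne_on y x δ ⟨hy0, hy1⟩ hδ0 hx
    have step1 : (∫ x in S,
        (↑(Real.cos (π * (y - x)) / Real.sin (π * (y - x))) : ℂ) *
          Complex.exp (2 * π * Complex.I * ((k:ℂ)+1) * x))
        = ∫ x in S, (Complex.exp (2 * π * Complex.I * ((k:ℂ)+1) * y) *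
            (↑(Real.cos (π * (y - x)) / Real.sin (π * (y - x))) : ℂ) + Gf y k x) :=
      MeasureTheory.setIntegral_congr_fun hSmeas (fun x hx => pointwise y x k (hsin x hx))
    have hcotint : IntegrableOn
        (fun x => (↑(Real.cos (π * (y - x)) / Real.sin (π * (y - x))) : ℂ)) S := by
      apply ContinuousOn.integrableOn_compact hScomp
      apply Complex.continuous_ofReal.comp_continuousOn
      apply ContinuousOn.div
      · fun_prop
      · fun_prop
      · exact hsin
    have hGint : IntegrableOn (Gf y k) S :=
      (Gf_cont y k).continuousOn.integrableOn_compact hScomp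
    rw [step1, MeasureTheory.integral_add (hcotint.const_mul _) hGint,
      MeasureTheory.integral_const_mul, hS, cot_zero y δ hδ0 hδy hδ1y, mul_zero, zero_add]
    have hsub : Set.Ioo (y-δ) (y+δ) ⊆ Set.Icc (0:ℝ) 1 := by
      intro x hx
      obtain ⟨ha, hb⟩ := hx
      exact ⟨by linarith, by linarith⟩
    have hGIcc : IntegrableOn (Gf y k) (Set.Icc (0:ℝ) 1) :=
      (Gf_cont y k).continuousOn.integrableOn_compact isCompact_Icc
    rw [MeasureTheory.integral_diff measurableSet_Ioo hGIcc hsub, Gf_integral y k]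
  have hIoo : Tendsto (fun δ : ℝ => ∫ x in Set.Ioo (y-δ) (y+δ), Gf y k x)
      (nhdsWithin 0 (Set.Ioi 0)) (nhds 0) := by
    apply squeeze_zero_norm' (a := fun δ : ℝ => (2*(k:ℝ)+2) * (2*δ))
    · filter_upwards [self_mem_nhdsWithin] with δ hδ
      have hδ0 : (0:ℝ) < δ := hδ
      have hb := MeasureTheory.norm_setIntegral_le_of_norm_le_const
        (C := 2*(k:ℝ)+2) (s := Set.Ioo (y-δ) (y+δ)) (μ := volume)
        (measure_Ioo_lt_top) (fun x _ => Gf_bound y k x)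
      have hvol : volume.real (Set.Ioo (y-δ) (y+δ)) = 2*δ := by
        rw [Real.volume_real_Ioo_of_le (by linarith)]
        ring
      rw [hvol] at hb
      exact hb
    · have hcont : Tendsto (fun δ : ℝ => (2*(k:ℝ)+2) * (2*δ)) (nhds 0) (nhds 0) := by
        have hc : Continuous (fun δ : ℝ => (2*(k:ℝ)+2) * (2*δ)) := by fun_prop
        simpa using hc.tendsto 0
      exact hcont.mono_left nhdsWithin_le_nhds
  have hlim : Tendsto (fun δ : ℝ =>
      -Complex.I * Complex.exp (2 * π * Complex.I * ((k:ℂ)+1) * y)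
        - ∫ x in Set.Ioo (y-δ) (y+δ), Gf y k x)
      (nhdsWithin 0 (Set.Ioi 0))
      (nhds (-Complex.I * Complex.exp (2 * π * Complex.I * ((k:ℂ)+1) * y))) := by
    have h2 := (tendsto_const_nhds (x := -Complex.I *
      Complex.exp (2 * π * Complex.I * ((k:ℂ)+1) * y))
      (f := nhdsWithin (0:ℝ) (Set.Ioi 0))).sub hIoo
    rw [sub_zero] at h2
    exact h2
  exact hlim.congr' (Filter.eventuallyEq_of_mem hev (fun δ hδ => (key δ hδ).symm))

private lemma main_int_pos (y : ℝ) (hy : y ∈ Set.Ioo (0:ℝ) 1) (n : ℤ) (hn : 0 < n) :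
    Filter.Tendsto
      (fun δ : ℝ => ∫ x in Set.Icc (0:ℝ) 1 \ Set.Ioo (y - δ) (y + δ),
        (↑(Real.cos (π * (y - x)) / Real.sin (π * (y - x))) : ℂ) *
          Complex.exp (2 * π * Complex.I * n * x))
      (nhdsWithin 0 (Set.Ioi 0))
      (nhds (-Complex.I * (n.sign : ℂ) * Complex.exp (2 * π * Complex.I * n * y))) := by
  set k := (n-1).toNat with hk
  have hcast : ((n:ℤ):ℂ) = (k:ℂ)+1 := by
    have h1 : ((k:ℤ)) = n - 1 := Int.toNat_of_nonneg (by omega)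
    have h2 := congrArg (fun z : ℤ => (z:ℂ)) h1
    push_cast at h2
    rw [h2]
    ring
  have hsign : ((n.sign : ℤ) : ℂ) = 1 := by
    rw [Int.sign_eq_one_of_pos hn, Int.cast_one]
  simp only [hcast, hsign, mul_one]
  exact main_pos y hy k

/-- Action of the periodic Hilbert transform (singular convolution with `cot (π(y-x))` on the
unit circle) on the exponentials `e^{2πinx}`: for `y ∈ (0,1)` and `n ∈ ℤ`,
`p.v. ∫₀¹ cot (π (y - x)) e^{2πinx} dx = -i sgn(n) e^{2πiny}`. -/
theorem pv_integral_cot_exp (y : ℝ) (hy : y ∈ Set.Ioo (0:ℝ) 1) (n : ℤ) :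
    Filter.Tendsto
      (fun δ : ℝ => ∫ x in Set.Icc (0:ℝ) 1 \ Set.Ioo (y - δ) (y + δ),
        (↑(Real.cos (π * (y - x)) / Real.sin (π * (y - x))) : ℂ) *
          Complex.exp (2 * π * Complex.I * n * x))
      (nhdsWithin 0 (Set.Ioi 0))
      (nhds (-Complex.I * (n.sign : ℂ) * Complex.exp (2 * π * Complex.I * n * y))) := by
  rcases lt_trichotomy n 0 with hn | rfl | hn
  · -- negative case via conjugation
    have h := main_int_pos y hy (-n) (by omega)
    have hc := ((Complex.continuous_conj).tendsto _).comp h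
    have hfun : ∀ δ : ℝ,
        (starRingEnd ℂ) (∫ x in Set.Icc (0:ℝ) 1 \ Set.Ioo (y - δ) (y + δ),
          (↑(Real.cos (π * (y - x)) / Real.sin (π * (y - x))) : ℂ) *
            Complex.exp (2 * π * Complex.I * (-n : ℤ) * x))
        = ∫ x in Set.Icc (0:ℝ) 1 \ Set.Ioo (y - δ) (y + δ),
          (↑(Real.cos (π * (y - x)) / Real.sin (π * (y - x))) : ℂ) *
            Complex.exp (2 * π * Complex.I * n * x) := by
      intro δ
      rw [← integral_conj]
      apply MeasureTheory.integral_congr_ae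
      apply Filter.Eventually.of_forall
      intro x
      dsimp only
      rw [map_mul, Complex.conj_ofReal, ← Complex.exp_conj]
      congr 2
      simp only [map_mul, Complex.conj_I, Complex.conj_ofReal, map_intCast, map_ofNat]
      push_cast
      ring
    have hlimeq : (starRingEnd ℂ)
        (-Complex.I * (((-n : ℤ).sign : ℤ) : ℂ) * Complex.exp (2 * π * Complex.I * (-n : ℤ) * y))
        = -Complex.I * ((n.sign : ℤ) : ℂ) * Complex.exp (2 * π * Complex.I * n * y) := by
      rw [Int.sign_eq_one_of_pos (by omega : (0:ℤ) < -n), Int.sign_eq_neg_one_of_neg hn]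
      rw [map_mul, map_mul, ← Complex.exp_conj]
      have harg : (starRingEnd ℂ) (2 * π * Complex.I * ((-n : ℤ) : ℂ) * y)
          = 2 * π * Complex.I * (n : ℂ) * y := by
        simp only [map_mul, Complex.conj_I, Complex.conj_ofReal, map_intCast, map_ofNat]
        push_cast
        ring
      rw [harg]
      simp only [map_mul, map_neg, Complex.conj_I, Int.cast_one, Int.cast_neg, map_one]
      ring
    rw [hlimeq] at hc
    exact hc.congr hfun
  · -- zero case
    obtain ⟨hy0, hy1⟩ := hy
    simp only [Int.cast_zero, mul_zero, zero_mul, Complex.exp_zero, mul_one, Int.sign_zero]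
    have hεpos : 0 < min y (1-y) := lt_min hy0 (by linarith)
    have hev : Set.Ioo (0:ℝ) (min y (1-y)) ∈ nhdsWithin (0:ℝ) (Set.Ioi 0) :=
      Ioo_mem_nhdsGT_of_mem ⟨le_refl 0, hεpos⟩
    have heq : (fun _ : ℝ => (0:ℂ)) =ᶠ[nhdsWithin (0:ℝ) (Set.Ioi 0)]
        (fun δ : ℝ => ∫ x in Set.Icc (0:ℝ) 1 \ Set.Ioo (y - δ) (y + δ),
          (↑(Real.cos (π * (y - x)) / Real.sin (π * (y - x))) : ℂ)) := by
      apply Filter.eventuallyEq_of_mem hev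
      intro δ hδ
      exact (cot_zero y δ hδ.1 (lt_of_lt_of_le hδ.2 (min_le_left _ _))
        (lt_of_lt_of_le hδ.2 (min_le_right _ _))).symm
    exact tendsto_const_nhds.congr' heq
  · exact main_int_pos y hy n hn
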